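/- In a quasigroup Q, the following identities are equivalent for all p,q,r in Q: (1) p(q(pr))=((pq)p)r; (2) ((pq)r)q=p(q(rq)); (3) (pq)(rp)=(p(qr))p. -/

import Mathlib

open TensorProduct

universe u v w

/-- A quasigroup: a set with product, identity `e`, and two-sided inverses satisfying
`p⁻¹(pq) = q` and `(qp)p⁻¹ = q`. -/
structure QuasigroupStruct (Q : Type u) where
  mul : Q → Q → Q
  one : Q
  inv : Q → Q
  mul_one : ∀ p, mul p one = p
  one_mul : ∀ p, mul one p = p
  inv_mul_cancel : ∀ p q, mul (inv p) (mul p q) = q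
  mul_inv_cancel : ∀ p q, mul (mul q p) (inv p) = q

namespace QuasigroupStruct

variable {Q : Type u} (G : QuasigroupStruct Q)

lemma inv_mul_self (p : Q) : G.mul (G.inv p) p = G.one := by
  have h := G.inv_mul_cancel p G.one
  rwa [G.mul_one] at h

lemma mul_inv_self (p : Q) : G.mul p (G.inv p) = G.one := by
  have h := G.mul_inv_cancel p G.one
  rwa [G.one_mul] at h

lemma inv_inv (p : Q) : G.inv (G.inv p) = p := by
  have h := G.inv_mul_cancel (G.inv p) p
  rw [G.inv_mul_self p] at h
  rwa [G.mul_one] at h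

lemma mul_inv_cancel_left (p q : Q) : G.mul p (G.mul (G.inv p) q) = q := by
  have h := G.inv_mul_cancel (G.inv p) q
  rwa [G.inv_inv] at h

lemma inv_mul_cancel_right (p q : Q) : G.mul (G.mul q (G.inv p)) p = q := by
  have h := G.mul_inv_cancel (G.inv p) q
  rwa [G.inv_inv] at h

lemma mul_inv_rev (p q : Q) : G.inv (G.mul p q) = G.mul (G.inv q) (G.inv p) := by
  have h1 : G.mul q (G.inv (G.mul p q)) = G.inv p := by
    have h := G.mul_inv_cancel (G.mul p q) (G.inv p)
    rwa [G.inv_mul_cancel p q] at h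
  calc G.inv (G.mul p q)
      = G.mul (G.inv q) (G.mul q (G.inv (G.mul p q))) := (G.inv_mul_cancel q _).symm
    _ = G.mul (G.inv q) (G.inv p) := by rw [h1]

lemma inv_one : G.inv G.one = G.one := by
  have h := G.inv_mul_cancel G.one G.one
  rwa [G.one_mul, G.mul_one] at h

/-- Inversion is injective. -/
lemma inv_injective {a b : Q} (h : G.inv a = G.inv b) : a = b := by
  have := congrArg G.inv h
  rwa [G.inv_inv, G.inv_inv] at this

/-- (1) implies (2), by applying (1) to inverses and inverting. -/
lemma one_imp_two
    (h1 : ∀ p q r, G.mul p (G.mul q (G.mul p r)) = G.mul (G.mul (G.mul p q) p) r) :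
    ∀ p q r, G.mul (G.mul (G.mul p q) r) q = G.mul p (G.mul q (G.mul r q)) := by
  intro p q r
  have h := congrArg G.inv (h1 (G.inv q) (G.inv r) (G.inv p))
  simp only [G.mul_inv_rev, G.inv_inv] at h
  exact h

/-- (2) implies (1), by applying (2) to inverses and inverting. -/
lemma two_imp_one
    (h2 : ∀ p q r, G.mul (G.mul (G.mul p q) r) q = G.mul p (G.mul q (G.mul r q))) :
    ∀ p q r, G.mul p (G.mul q (G.mul p r)) = G.mul (G.mul (G.mul p q) p) r := by
  intro p q r
  have h := congrArg G.inv (h2 (G.inv r) (G.inv p) (G.inv q))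
  simp only [G.mul_inv_rev, G.inv_inv] at h
  exact h

/-- Flexibility follows from (1). -/
lemma flex_of_one
    (h1 : ∀ p q r, G.mul p (G.mul q (G.mul p r)) = G.mul (G.mul (G.mul p q) p) r) :
    ∀ x y, G.mul x (G.mul y x) = G.mul (G.mul x y) x := by
  intro x y
  have h := h1 x y G.one
  rwa [G.mul_one, G.mul_one] at h

/-- (1) and (2) together imply (3). -/
lemma one_two_imp_three
    (h1 : ∀ p q r, G.mul p (G.mul q (G.mul p r)) = G.mul (G.mul (G.mul p q) p) r)
    (h2 : ∀ p q r, G.mul (G.mul (G.mul p q) r) q = G.mul p (G.mul q (G.mul r q))) :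
    ∀ p q r, G.mul (G.mul p q) (G.mul r p) = G.mul (G.mul p (G.mul q r)) p := by
  intro p q r
  have flex := G.flex_of_one h1
  -- p(qr) = ((pq)p)(p⁻¹ r)
  have e1 : G.mul p (G.mul q r) =
      G.mul (G.mul (G.mul p q) p) (G.mul (G.inv p) r) := by
    have h := h1 p q (G.mul (G.inv p) r)
    rwa [G.mul_inv_cancel_left] at h
  rw [e1, h2 (G.mul p q) p (G.mul (G.inv p) r), flex p (G.mul (G.inv p) r),
    G.mul_inv_cancel_left]

/-- (3) implies (1). -/
lemma three_imp_one
    (h3 : ∀ p q r, G.mul (G.mul p q) (G.mul r p) = G.mul (G.mul p (G.mul q r)) p) :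
    ∀ p q r, G.mul p (G.mul q (G.mul p r)) = G.mul (G.mul (G.mul p q) p) r := by
  -- key: p(yz) = ((py)p)(p⁻¹ z)
  have key : ∀ p y z, G.mul p (G.mul y z) =
      G.mul (G.mul (G.mul p y) p) (G.mul (G.inv p) z) := by
    intro p y z
    have h := h3 p (G.mul y z) (G.inv z)
    rw [G.mul_inv_cancel] at h
    -- h : (p(yz))(z⁻¹ p) = (py)p
    have h' := congrArg (fun t => G.mul t (G.inv (G.mul (G.inv z) p))) h
    rw [G.mul_inv_cancel, G.mul_inv_rev, G.inv_inv] at h'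
    exact h'
  intro p q r
  have h := key p q (G.mul p r)
  rwa [G.inv_mul_cancel] at h

end QuasigroupStruct


/-- In a quasigroup, the three Moufang-type identities are equivalent. -/
theorem quasigroup_moufang_equiv {Q : Type u} (G : QuasigroupStruct Q) :
    ((∀ p q r, G.mul p (G.mul q (G.mul p r)) = G.mul (G.mul (G.mul p q) p) r) ↔
      (∀ p q r, G.mul (G.mul (G.mul p q) r) q = G.mul p (G.mul q (G.mul r q)))) ∧
    ((∀ p q r, G.mul (G.mul (G.mul p q) r) q = G.mul p (G.mul q (G.mul r q))) ↔
      (∀ p q r, G.mul (G.mul p q) (G.mul r p) = G.mul (G.mul p (G.mul q r)) p)) := by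
  exact ⟨⟨G.one_imp_two, G.two_imp_one⟩,
    ⟨fun h2 => G.one_two_imp_three (G.two_imp_one h2) h2,
     fun h3 => G.one_imp_two (G.three_imp_one h3)⟩⟩
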